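/- arXiv:2007.14137 — 3 statements merged into one kernel-verified Lean document; each statement's English description precedes it below -/
import Mathlib

section
/- (Eckart–Young–Mirsky for Frobenius norm) Let A ∈ R^{n×N} have singular value decomposition A = Σ_{i=1}^{rank(A)} σ_i u_i v_i^T with σ_1 ≥ σ_2 ≥ ··· > 0. For any r ≤ rank(A), the truncation A_r = Σ_{i=1}^{r} σ_i u_i v_i^T satisfies ‖A − A_r‖_F ≤ ‖A − B‖_F for every matrix B of rank at most r, and ‖A − A_r‖_F² = Σ_{i>r} σ_i². -/
open Finset

/-- Sum of squares of an orthonormal expansion. -/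
lemma ortho_sum {ι : Type*} [Fintype ι] (s : Finset ℕ) (e : ℕ → ι → ℝ) (w : ℕ → ℝ)
    (h : ∀ i ∈ s, ∀ j ∈ s, ∑ x, e i x * e j x = if i = j then 1 else 0) :
    ∑ x, (∑ i ∈ s, w i * e i x) ^ 2 = ∑ i ∈ s, w i ^ 2 := by
  have key : ∀ x, (∑ i ∈ s, w i * e i x) ^ 2
      = ∑ i ∈ s, ∑ j ∈ s, (w i * w j) * (e i x * e j x) := by
    intro x
    rw [sq, Finset.sum_mul_sum]
    exact Finset.sum_congr rfl fun i _ => Finset.sum_congr rfl fun j _ => by ring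
  simp_rw [key]
  rw [Finset.sum_comm]
  have swap2 : ∀ i ∈ s, ∑ x : ι, ∑ j ∈ s, (w i * w j) * (e i x * e j x)
      = ∑ j ∈ s, (w i * w j) * ∑ x, e i x * e j x := by
    intro i _
    rw [Finset.sum_comm]
    exact Finset.sum_congr rfl fun j _ => by rw [Finset.mul_sum]
  rw [Finset.sum_congr rfl swap2]
  refine Finset.sum_congr rfl fun i hi => ?_
  rw [Finset.sum_eq_single i]
  · rw [h i hi i hi, if_pos rfl]; ring
  · intro j hj hji
    rw [h i hi j hj, if_neg fun hij => hji hij.symm, mul_zero]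
  · intro hi'; exact absurd hi hi'

lemma gram {n N : ℕ} (R : ℕ) (σ : ℕ → ℝ) (u : ℕ → Fin n → ℝ) (v : ℕ → Fin N → ℝ)
    (hu : ∀ i < R, ∀ j < R, ∑ a, u i a * u j a = if i = j then 1 else 0)
    (hv : ∀ i < R, ∀ j < R, ∑ b, v i b * v j b = if i = j then 1 else 0)
    (s : Finset ℕ) (hs : s ⊆ Finset.range R) :
    ∑ a, ∑ b, (∑ i ∈ s, σ i * (u i a * v i b)) ^ 2 = ∑ i ∈ s, σ i ^ 2 := by
  have hv' : ∀ i ∈ s, ∀ j ∈ s, ∑ b, v i b * v j b = if i = j then 1 else 0 :=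
    fun i hi j hj => hv i (Finset.mem_range.mp (hs hi)) j (Finset.mem_range.mp (hs hj))
  have step1 : ∀ a, ∑ b, (∑ i ∈ s, σ i * (u i a * v i b)) ^ 2
      = ∑ i ∈ s, (σ i * u i a) ^ 2 := by
    intro a
    have := ortho_sum s v (fun i => σ i * u i a) hv'
    rw [← this]
    refine Finset.sum_congr rfl fun b _ => ?_
    congr 1
    exact Finset.sum_congr rfl fun i _ => by ring
  rw [Finset.sum_congr rfl fun a _ => step1 a, Finset.sum_comm]
  refine Finset.sum_congr rfl fun i hi => ?_
  have hii := hu i (Finset.mem_range.mp (hs hi)) i (Finset.mem_range.mp (hs hi))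
  rw [if_pos rfl] at hii
  calc ∑ a, (σ i * u i a) ^ 2 = σ i ^ 2 * ∑ a, u i a * u i a := by
        rw [Finset.mul_sum]; exact Finset.sum_congr rfl fun a _ => by ring
    _ = σ i ^ 2 := by rw [hii, mul_one]

lemma rearrange (R r : ℕ) (hr : r ≤ R) (f c : ℕ → ℝ)
    (hf0 : ∀ i < R, 0 ≤ f i) (hfm : ∀ i j, i ≤ j → j < R → f j ≤ f i)
    (hc0 : ∀ i < R, 0 ≤ c i) (hc1 : ∀ i < R, c i ≤ 1)
    (hcs : ∑ i ∈ range R, c i ≤ (r : ℝ)) :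
    ∑ i ∈ range R, f i * c i ≤ ∑ i ∈ range r, f i := by
  rcases eq_or_lt_of_le hr with hEq | hlt
  · subst hEq
    refine Finset.sum_le_sum fun i hi => ?_
    have hi' := Finset.mem_range.mp hi
    nlinarith [hf0 i hi', hc0 i hi', hc1 i hi']
  · set p := f r with hp
    have hp0 : 0 ≤ p := hf0 r hlt
    have hsplit : ∑ i ∈ range R, f i * c i
        = ∑ i ∈ range r, f i * c i + ∑ i ∈ Ico r R, f i * c i := by
      rw [Finset.range_eq_Ico, ← Finset.sum_Ico_consecutive _ (Nat.zero_le r) hr,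
        ← Finset.range_eq_Ico]
    have hcsplit : ∑ i ∈ range R, c i = ∑ i ∈ range r, c i + ∑ i ∈ Ico r R, c i := by
      rw [Finset.range_eq_Ico, ← Finset.sum_Ico_consecutive _ (Nat.zero_le r) hr,
        ← Finset.range_eq_Ico]
    have h1 : ∑ i ∈ range r, (f i * c i - f i) ≤ ∑ i ∈ range r, p * (c i - 1) := by
      refine Finset.sum_le_sum fun i hi => ?_
      have hi' := Finset.mem_range.mp hi
      have hfi : p ≤ f i := hfm i r (le_of_lt hi') hlt
      have := hc1 i (lt_trans hi' hlt)
      nlinarith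
    have h2 : ∑ i ∈ Ico r R, f i * c i ≤ ∑ i ∈ Ico r R, p * c i := by
      refine Finset.sum_le_sum fun i hi => ?_
      obtain ⟨hi1, hi2⟩ := Finset.mem_Ico.mp hi
      exact mul_le_mul_of_nonneg_right (hfm r i hi1 hi2) (hc0 i hi2)
    have e1 : ∑ i ∈ range r, p * (c i - 1) = p * ∑ i ∈ range r, c i - p * r := by
      rw [← Finset.mul_sum, Finset.sum_sub_distrib, Finset.sum_const, Finset.card_range,
        nsmul_eq_mul, mul_one, mul_sub]
    have e2 : ∑ i ∈ Ico r R, p * c i = p * ∑ i ∈ Ico r R, c i := by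
      rw [← Finset.mul_sum]
    have hfinal : p * ∑ i ∈ range R, c i - p * r ≤ 0 := by nlinarith
    have hsum1 : ∑ i ∈ range r, f i * c i - ∑ i ∈ range r, f i
        = ∑ i ∈ range r, (f i * c i - f i) := by rw [Finset.sum_sub_distrib]
    nlinarith [h1, h2]

lemma proj_bound {E : Type*} [NormedAddCommGroup E] [InnerProductSpace ℝ E] {d : ℕ}
    (Q : Fin d → E) (hQ : Orthonormal ℝ Q) (x y : E)
    (hy : y ∈ Submodule.span ℝ (Set.range Q)) :
    ‖x‖ ^ 2 - ∑ j, (inner ℝ (Q j) x : ℝ) ^ 2 ≤ ‖x - y‖ ^ 2 := by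
  set p : E := ∑ j, (inner ℝ (Q j) x : ℝ) • Q j with hp
  have hQij := orthonormal_iff_ite.mp hQ
  have hinner_p : ∀ j, (inner ℝ (Q j) p : ℝ) = inner ℝ (Q j) x := by
    intro j
    rw [hp, inner_sum]
    rw [Finset.sum_eq_single j]
    · rw [real_inner_smul_right, hQij j j, if_pos rfl, mul_one]
    · intro k _ hk
      rw [real_inner_smul_right, hQij j k, if_neg fun h => hk h.symm, mul_zero]
    · simp
  have horth : ∀ z ∈ Submodule.span ℝ (Set.range Q), (inner ℝ (x - p) z : ℝ) = 0 := by
    intro z hz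
    induction hz using Submodule.span_induction with
    | mem z hz =>
      obtain ⟨j, rfl⟩ := hz
      have h1 : (inner ℝ (x - p) (Q j) : ℝ) = inner ℝ (Q j) (x - p) := real_inner_comm _ _
      rw [h1, inner_sub_right, hinner_p j, sub_self]
    | zero => rw [inner_zero_right]
    | add z w _ _ hz hw => rw [inner_add_right, hz, hw, add_zero]
    | smul a z _ hz => rw [real_inner_smul_right, hz, mul_zero]
  have hpmem : p ∈ Submodule.span ℝ (Set.range Q) :=
    Submodule.sum_mem _ fun j _ => Submodule.smul_mem _ _ (Submodule.subset_span ⟨j, rfl⟩)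
  have hxy : ‖x - y‖ ^ 2 = ‖x - p‖ ^ 2 + ‖p - y‖ ^ 2 := by
    have hdecomp : x - y = (x - p) + (p - y) := by abel
    rw [hdecomp, norm_add_sq_real, horth (p - y) (Submodule.sub_mem _ hpmem hy)]
    ring
  have hxp : ‖x - p‖ ^ 2 = ‖x‖ ^ 2 - ∑ j, (inner ℝ (Q j) x : ℝ) ^ 2 := by
    have hinner_xp : (inner ℝ x p : ℝ) = ∑ j, (inner ℝ (Q j) x : ℝ) ^ 2 := by
      rw [hp, inner_sum]
      exact Finset.sum_congr rfl fun j _ => by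
        rw [real_inner_smul_right, real_inner_comm x (Q j), sq]
    have hpQ : ∀ j, (inner ℝ p (Q j) : ℝ) = inner ℝ (Q j) x := fun j => by
      rw [real_inner_comm]; exact hinner_p j
    have hpp : (inner ℝ p p : ℝ) = ∑ j, (inner ℝ (Q j) x : ℝ) ^ 2 := by
      nth_rewrite 2 [hp]
      rw [inner_sum]
      refine Finset.sum_congr rfl fun j _ => ?_
      rw [real_inner_smul_right, hpQ j, sq]
    rw [norm_sub_sq_real, hinner_xp, ← real_inner_self_eq_norm_sq p, hpp]
    ring
  nlinarith [sq_nonneg ‖p - y‖]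

lemma euc_inner {n : ℕ} (x y : EuclideanSpace ℝ (Fin n)) :
    (inner ℝ x y : ℝ) = ∑ a, x a * y a := by
  rw [PiLp.inner_apply]
  exact Finset.sum_congr rfl fun a _ => by simp [RCLike.inner_apply, mul_comm]


/-- The Frobenius norm of a real matrix. -/
noncomputable def frob {n N : ℕ} (M : Matrix (Fin n) (Fin N) ℝ) : ℝ :=
  Real.sqrt (∑ a, ∑ b, M a b ^ 2)

/-- Eckart–Young–Mirsky (Frobenius norm).  If `A = ∑_{i<R} σᵢ uᵢ vᵢᵀ` is a
singular value decomposition of `A` (with `R = rank A`, nonincreasing positive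
singular values `σ` and orthonormal families `u`, `v`), then for every `r ≤ R`
the truncation `A_r = ∑_{i<r} σᵢ uᵢ vᵢᵀ` satisfies `‖A − A_r‖_F ≤ ‖A − B‖_F`
for every matrix `B` of rank at most `r`, and `‖A − A_r‖_F² = ∑_{i ≥ r} σᵢ²`. -/
theorem stmt_6 (n N R : ℕ) (A : Matrix (Fin n) (Fin N) ℝ)
    (σ : ℕ → ℝ) (u : ℕ → Fin n → ℝ) (v : ℕ → Fin N → ℝ)
    (hrank : A.rank = R)
    (hσpos : ∀ i < R, 0 < σ i)
    (hσmono : ∀ i j, i ≤ j → j < R → σ j ≤ σ i)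
    (hu : ∀ i < R, ∀ j < R, ∑ a, u i a * u j a = if i = j then 1 else 0)
    (hv : ∀ i < R, ∀ j < R, ∑ b, v i b * v j b = if i = j then 1 else 0)
    (hA : A = ∑ i ∈ Finset.range R, σ i • Matrix.of (fun a b => u i a * v i b))
    (r : ℕ) (hr : r ≤ R) :
    (∀ B : Matrix (Fin n) (Fin N) ℝ, B.rank ≤ r →
      frob (A - ∑ i ∈ Finset.range r, σ i • Matrix.of (fun a b => u i a * v i b)) ≤
        frob (A - B)) ∧
    (frob (A - ∑ i ∈ Finset.range r, σ i • Matrix.of (fun a b => u i a * v i b))) ^ 2 =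
      ∑ i ∈ Finset.Ico r R, σ i ^ 2 := by
  classical
  have hA' : ∀ a b, A a b = ∑ i ∈ Finset.range R, σ i * (u i a * v i b) := by
    intro a b
    rw [hA]
    simp [Matrix.sum_apply]
  have hdiff : ∀ a b,
      (A - ∑ i ∈ Finset.range r, σ i • Matrix.of (fun a b => u i a * v i b)) a b
        = ∑ i ∈ Finset.Ico r R, σ i * (u i a * v i b) := by
    intro a b
    rw [Matrix.sub_apply, hA' a b]
    have hsum : (∑ i ∈ Finset.range r, σ i • Matrix.of (fun a b => u i a * v i b)) a b
        = ∑ i ∈ Finset.range r, σ i * (u i a * v i b) := by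
      simp [Matrix.sum_apply]
    rw [hsum]
    have hcons := Finset.sum_Ico_consecutive (fun i => σ i * (u i a * v i b))
      (Nat.zero_le r) hr
    simp only [Finset.range_eq_Ico]
    linarith [hcons]
  -- part 2
  have h2 : (frob (A - ∑ i ∈ Finset.range r, σ i • Matrix.of (fun a b => u i a * v i b))) ^ 2 =
      ∑ i ∈ Finset.Ico r R, σ i ^ 2 := by
    rw [frob, Real.sq_sqrt (by positivity)]
    rw [Finset.sum_congr rfl fun a _ => Finset.sum_congr rfl fun b _ => by rw [hdiff a b]]
    exact gram R σ u v hu hv _ (fun i hi => Finset.mem_range.mpr (Finset.mem_Ico.mp hi).2)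
  refine ⟨?_, h2⟩
  intro B hB
  set e : (Fin n → ℝ) ≃ₗ[ℝ] EuclideanSpace ℝ (Fin n) :=
    (WithLp.linearEquiv 2 ℝ (Fin n → ℝ)).symm with he_def
  have he : ∀ (f : Fin n → ℝ) (a : Fin n), e f a = f a := fun _ _ => rfl
  set C0 : Submodule ℝ (Fin n → ℝ) := Submodule.span ℝ (Set.range B.transpose) with hC0
  set C : Submodule ℝ (EuclideanSpace ℝ (Fin n)) :=
    C0.map (e : (Fin n → ℝ) →ₗ[ℝ] EuclideanSpace ℝ (Fin n)) with hC
  have hd : Module.finrank ℝ C ≤ r := by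
    rw [hC, LinearEquiv.finrank_map_eq e C0, hC0]
    rw [Matrix.rank_eq_finrank_span_cols] at hB
    exact hB
  set d := Module.finrank ℝ C with hdd
  set q : OrthonormalBasis (Fin d) ℝ C := stdOrthonormalBasis ℝ C with hq
  set Q : Fin d → EuclideanSpace ℝ (Fin n) := fun j => (q j : EuclideanSpace ℝ (Fin n)) with hQdef
  have hQ : Orthonormal ℝ Q := by
    rw [orthonormal_iff_ite]
    intro i j
    have h := orthonormal_iff_ite.mp q.orthonormal i j
    rwa [Submodule.coe_inner] at h
  have hQspan : ∀ y ∈ C, y ∈ Submodule.span ℝ (Set.range Q) := by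
    intro y hy
    have hrep := q.sum_repr ⟨y, hy⟩
    have hy' : y = ∑ j, q.repr ⟨y, hy⟩ j • Q j := by
      conv_lhs => rw [show y = ((⟨y, hy⟩ : C) : EuclideanSpace ℝ (Fin n)) from rfl, ← hrep]
      push_cast
      rfl
    rw [hy']
    exact Submodule.sum_mem _ fun j _ => Submodule.smul_mem _ _ (Submodule.subset_span ⟨j, rfl⟩)
  set X : Fin N → EuclideanSpace ℝ (Fin n) := fun b => e (fun a => A a b) with hX
  set Y : Fin N → EuclideanSpace ℝ (Fin n) := fun b => e (fun a => B a b) with hY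
  have hYC : ∀ b, Y b ∈ C := by
    intro b
    exact Submodule.mem_map_of_mem (Submodule.subset_span ⟨b, rfl⟩)
  have e0 : ∀ b a, (X b) a = A a b := fun b a => rfl
  -- per-column bound
  have hcol : ∀ b, ‖X b‖ ^ 2 - ∑ j, (inner ℝ (Q j) (X b) : ℝ) ^ 2 ≤ ∑ a, ((A - B) a b) ^ 2 := by
    intro b
    have h1 := proj_bound Q hQ (X b) (Y b) (hQspan _ (hYC b))
    have hxy : X b - Y b = e (fun a => A a b - B a b) := by
      rw [hX, hY, ← map_sub]
      rfl
    have h2' : ‖X b - Y b‖ ^ 2 = ∑ a, ((A - B) a b) ^ 2 := by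
      rw [hxy, ← real_inner_self_eq_norm_sq, euc_inner]
      refine Finset.sum_congr rfl fun a _ => ?_
      rw [he, Matrix.sub_apply]
      ring
    linarith
  have hXnorm : ∀ b, ‖X b‖ ^ 2 = ∑ a, A a b ^ 2 := by
    intro b
    rw [← real_inner_self_eq_norm_sq, euc_inner]
    exact Finset.sum_congr rfl fun a _ => by rw [e0]; ring
  have T1 : ∑ b, ‖X b‖ ^ 2 = ∑ i ∈ Finset.range R, σ i ^ 2 := by
    rw [Finset.sum_congr rfl fun b _ => hXnorm b, Finset.sum_comm,
      Finset.sum_congr rfl fun a _ => Finset.sum_congr rfl fun b _ => by rw [hA' a b]]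
    exact gram R σ u v hu hv _ fun i hi => hi
  set t : Fin d → ℕ → ℝ := fun j i => ∑ a, Q j a * u i a with ht
  have hQA : ∀ j b, (inner ℝ (Q j) (X b) : ℝ)
      = ∑ i ∈ Finset.range R, (σ i * t j i) * v i b := by
    intro j b
    rw [euc_inner]
    calc ∑ a, Q j a * X b a
        = ∑ a, ∑ i ∈ Finset.range R, (σ i * (Q j a * u i a)) * v i b := by
          refine Finset.sum_congr rfl fun a _ => ?_
          rw [e0, hA' a b, Finset.mul_sum]
          exact Finset.sum_congr rfl fun i _ => by ring
      _ = ∑ i ∈ Finset.range R, ∑ a, (σ i * (Q j a * u i a)) * v i b := Finset.sum_comm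
      _ = ∑ i ∈ Finset.range R, (σ i * t j i) * v i b := by
          refine Finset.sum_congr rfl fun i _ => ?_
          rw [ht, Finset.mul_sum, Finset.sum_mul]
  have hv' : ∀ i ∈ Finset.range R, ∀ j ∈ Finset.range R,
      ∑ b, v i b * v j b = if i = j then 1 else 0 :=
    fun i hi j hj => hv i (Finset.mem_range.mp hi) j (Finset.mem_range.mp hj)
  have T2 : ∀ j, ∑ b, (inner ℝ (Q j) (X b) : ℝ) ^ 2
      = ∑ i ∈ Finset.range R, σ i ^ 2 * t j i ^ 2 := by
    intro j
    rw [Finset.sum_congr rfl fun b _ => by rw [hQA j b]]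
    rw [ortho_sum (Finset.range R) v (fun i => σ i * t j i) hv']
    exact Finset.sum_congr rfl fun i _ => by ring
  set c : ℕ → ℝ := fun i => ∑ j, t j i ^ 2 with hc
  have Tsum : ∑ b, ∑ j, (inner ℝ (Q j) (X b) : ℝ) ^ 2
      = ∑ i ∈ Finset.range R, σ i ^ 2 * c i := by
    rw [Finset.sum_comm, Finset.sum_congr rfl fun j (_ : j ∈ Finset.univ) => T2 j,
      Finset.sum_comm]
    refine Finset.sum_congr rfl fun i _ => ?_
    rw [hc, Finset.mul_sum]
  -- Bessel bounds
  have hc1 : ∀ i < R, c i ≤ 1 := by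
    intro i hi
    have hb := hQ.sum_inner_products_le (e (u i)) (s := Finset.univ)
    have hnorm : ‖e (u i)‖ ^ 2 = 1 := by
      rw [← real_inner_self_eq_norm_sq, euc_inner]
      have h1 := hu i hi i hi
      rw [if_pos rfl] at h1
      simp only [he]
      exact h1
    have hterm : ∀ j, ‖(inner ℝ (Q j) (e (u i)) : ℝ)‖ ^ 2 = t j i ^ 2 := by
      intro j
      rw [Real.norm_eq_abs, sq_abs, euc_inner, ht]
      simp only [he]
    calc c i = ∑ j, ‖(inner ℝ (Q j) (e (u i)) : ℝ)‖ ^ 2 := by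
          rw [hc]
          exact (Finset.sum_congr rfl fun j _ => hterm j).symm
      _ ≤ ‖e (u i)‖ ^ 2 := hb
      _ = 1 := hnorm
  set U : Fin R → EuclideanSpace ℝ (Fin n) := fun i => e (u i) with hUdef
  have hUo : Orthonormal ℝ U := by
    rw [orthonormal_iff_ite]
    intro i j
    rw [euc_inner]
    simp only [hUdef, he]
    rw [hu i i.isLt j j.isLt]
    simp [Fin.val_inj]
  have hc2 : ∑ i ∈ Finset.range R, c i ≤ (d : ℝ) := by
    have hj : ∀ j, ∑ i ∈ Finset.range R, t j i ^ 2 ≤ 1 := by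
      intro j
      have hb := hUo.sum_inner_products_le (Q j) (s := Finset.univ)
      have hQn : ‖Q j‖ ^ 2 = 1 := by rw [hQ.1 j, one_pow]
      have hterm : ∀ i : Fin R, ‖(inner ℝ (U i) (Q j) : ℝ)‖ ^ 2 = t j (i : ℕ) ^ 2 := by
        intro i
        rw [Real.norm_eq_abs, sq_abs, euc_inner, ht]
        simp only [hUdef, he]
        rw [Finset.sum_congr rfl fun a _ => mul_comm (u (i : ℕ) a) (Q j a)]
      calc ∑ i ∈ Finset.range R, t j i ^ 2 = ∑ i : Fin R, t j (i : ℕ) ^ 2 :=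
            Finset.sum_range fun i => t j i ^ 2
        _ = ∑ i : Fin R, ‖(inner ℝ (U i) (Q j) : ℝ)‖ ^ 2 :=
            Finset.sum_congr rfl fun i _ => (hterm i).symm
        _ ≤ ‖Q j‖ ^ 2 := hb
        _ = 1 := hQn
    calc ∑ i ∈ Finset.range R, c i = ∑ j : Fin d, ∑ i ∈ Finset.range R, t j i ^ 2 := by
          simp only [hc]
          exact Finset.sum_comm
      _ ≤ ∑ _j : Fin d, (1 : ℝ) := Finset.sum_le_sum fun j _ => hj j
      _ = (d : ℝ) := by simp
  have hre := rearrange R r hr (fun i => σ i ^ 2) c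
    (fun i _ => sq_nonneg _)
    (fun i j hij hjR => pow_le_pow_left₀ (hσpos j hjR).le (hσmono i j hij hjR) 2)
    (fun i _ => Finset.sum_nonneg fun _ _ => sq_nonneg _)
    hc1 (hc2.trans (by exact_mod_cast hd))
  -- main inequality
  have hmain : ∑ i ∈ Finset.Ico r R, σ i ^ 2 ≤ ∑ a, ∑ b, ((A - B) a b) ^ 2 := by
    have hIco : ∑ i ∈ Finset.Ico r R, σ i ^ 2
        = ∑ i ∈ Finset.range R, σ i ^ 2 - ∑ i ∈ Finset.range r, σ i ^ 2 := by
      rw [Finset.range_eq_Ico, ← Finset.sum_Ico_consecutive _ (Nat.zero_le r) hr,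
        ← Finset.range_eq_Ico]
      ring
    have hswap : ∑ a, ∑ b, ((A - B) a b) ^ 2 = ∑ b, ∑ a, ((A - B) a b) ^ 2 :=
      Finset.sum_comm
    have hlow : ∑ b, (‖X b‖ ^ 2 - ∑ j, (inner ℝ (Q j) (X b) : ℝ) ^ 2)
        ≤ ∑ b, ∑ a, ((A - B) a b) ^ 2 := Finset.sum_le_sum fun b _ => hcol b
    rw [Finset.sum_sub_distrib, T1, Tsum] at hlow
    rw [hIco, hswap]
    linarith
  -- conclude
  calc frob (A - ∑ i ∈ Finset.range r, σ i • Matrix.of (fun a b => u i a * v i b))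
      = Real.sqrt (∑ i ∈ Finset.Ico r R, σ i ^ 2) := by
        have hnn : 0 ≤ frob (A - ∑ i ∈ Finset.range r,
            σ i • Matrix.of (fun a b => u i a * v i b)) := by
          unfold frob
          exact Real.sqrt_nonneg _
        rw [← Real.sqrt_sq hnn, h2]
    _ ≤ Real.sqrt (∑ a, ∑ b, ((A - B) a b) ^ 2) := Real.sqrt_le_sqrt hmain
    _ = frob (A - B) := rfl
end

section
/- Let f: R^n → [0, ∞) satisfy the Łojasiewicz-type inequality |f(x)|^θ ≤ c'·dist(0, ∂̂f(x)) near a point x* with f(x*) = 0, for some exponent θ ∈ (1/2, 1) and constant c' > 0. Suppose y⁺ ∈ Ω1 is a projection of z onto Ω1, z⁺ ∈ Ω2 is a projection of y⁺ onto Ω2, f = δ_{Ω1} + (1/2)d_{Ω2}², and α is the angle between z − y⁺ and z⁺ − y⁺ with α ≤ π/2. Then (1 − cos α)/‖y⁺ − z⁺‖^{4θ−2} ≥ 2^{−2θ−1}c² where c = 1/c'. -/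
open Metric

set_option maxHeartbeats 1000000 in
/-- Separable-intersection bound obtained from the Łojasiewicz inequality for
`f = δ_{Ω₁} + (1/2) d_{Ω₂}²`.  Suppose `y⁺ ∈ Ω₁` is a metric projection of `z`
onto `Ω₁` and `z⁺ ∈ Ω₂` is a metric projection of `y⁺` onto `Ω₂` with
`y⁺ ≠ z⁺`.  The subgradients of `f` at `y⁺` have the form
`λ(z − y⁺) + (y⁺ − z⁺)` for `λ ≥ 0`, and `f(y⁺) = (1/2)‖y⁺ − z⁺‖²`; the
Łojasiewicz-type inequality `|f(y⁺)|^θ ≤ c' · dist(0, ∂̂f(y⁺))` reads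
`((1/2)‖y⁺ − z⁺‖²)^θ ≤ c' ‖λ(z − y⁺) + (y⁺ − z⁺)‖` for all `λ ≥ 0`.
If the angle `α` between `z − y⁺` and `z⁺ − y⁺` satisfies `α ≤ π/2`
(i.e. `cos α ≥ 0`), then `(1 − cos α)/‖y⁺ − z⁺‖^{4θ−2} ≥ 2^{−2θ−1} c²`,
where `c = 1/c'`. -/
theorem stmt_15 {E : Type*} [NormedAddCommGroup E] [InnerProductSpace ℝ E]
    (Ω₁ Ω₂ : Set E) (z yplus zplus : E)
    (θ c' : ℝ) (hθ : θ ∈ Set.Ioo (1/2 : ℝ) 1) (hc' : 0 < c')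
    (hy : yplus ∈ Ω₁) (hyproj : dist z yplus = infDist z Ω₁)
    (hz : zplus ∈ Ω₂) (hzproj : dist yplus zplus = infDist yplus Ω₂)
    (hne : yplus ≠ zplus)
    (hKL : ∀ l : ℝ, 0 ≤ l →
      ((1 / 2) * ‖yplus - zplus‖ ^ 2) ^ θ ≤
        c' * ‖l • (z - yplus) + (yplus - zplus)‖) :
    let cosα : ℝ :=
      inner ℝ (z - yplus) (zplus - yplus) / (‖z - yplus‖ * ‖zplus - yplus‖)
    0 ≤ cosα →
      (1 - cosα) / ‖yplus - zplus‖ ^ (4 * θ - 2) ≥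
        (2 : ℝ) ^ (-(2 * θ) - 1) * (1 / c') ^ 2 := by
  intro cosα hcos
  have hcosdef : cosα =
      inner ℝ (z - yplus) (zplus - yplus) / (‖z - yplus‖ * ‖zplus - yplus‖) := rfl
  have hn : (0:ℝ) < ‖yplus - zplus‖ := by
    rw [norm_pos_iff]; exact sub_ne_zero_of_ne hne
  set n : ℝ := ‖yplus - zplus‖ with hndef
  have hwn : ‖zplus - yplus‖ = n := by rw [hndef, norm_sub_rev]
  have hL0 : (0:ℝ) ≤ ((1/2) * n ^ 2) ^ θ := by positivity
  -- key squared inequality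
  have K : (((1/2) * n ^ 2) ^ θ) ^ 2 ≤ c' ^ 2 * (2 * (1 - cosα)) * n ^ 2 := by
    by_cases hu0 : z - yplus = 0
    · have h0 := hKL 0 le_rfl
      rw [zero_smul, zero_add] at h0
      have hc0 : cosα = 0 := by
        rw [hcosdef, hu0, inner_zero_left, zero_div]
      rw [hc0]
      nlinarith [h0, hn, hc'.le, mul_self_nonneg (((1/2) * n ^ 2) ^ θ)]
    · have ha : (0:ℝ) < ‖z - yplus‖ := norm_pos_iff.mpr hu0
      set a : ℝ := ‖z - yplus‖ with hadef
      set p : ℝ := inner ℝ (z - yplus) (zplus - yplus) with hpdef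
      have hpc : p = cosα * (a * n) := by
        rw [hcosdef, hwn]
        field_simp
      have hp : 0 ≤ p := by
        rw [hpc]; positivity
      have hl : (0:ℝ) ≤ p / a ^ 2 := by positivity
      have hKl := hKL (p / a ^ 2) hl
      have hexp : ‖(p / a ^ 2) • (z - yplus) + (yplus - zplus)‖ ^ 2
          = (p / a ^ 2) ^ 2 * a ^ 2 - 2 * (p / a ^ 2) * p + n ^ 2 := by
        have hneg : yplus - zplus = -(zplus - yplus) := by abel
        rw [hneg, ← sub_eq_add_neg, @norm_sub_sq_real, norm_smul,
          real_inner_smul_left, ← hpdef, hwn, ← hadef]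
        rw [mul_pow, Real.norm_eq_abs, sq_abs]
        ring
      have hnormsq : ‖(p / a ^ 2) • (z - yplus) + (yplus - zplus)‖ ^ 2
          = n ^ 2 - p ^ 2 / a ^ 2 := by
        rw [hexp]; field_simp; ring
      have hKl2 : (((1/2) * n ^ 2) ^ θ) ^ 2 ≤ c' ^ 2 * (n ^ 2 - p ^ 2 / a ^ 2) := by
        have hnn : (0:ℝ) ≤ ‖(p / a ^ 2) • (z - yplus) + (yplus - zplus)‖ := norm_nonneg _
        nlinarith [hKl, hL0, hnormsq, hc'.le]
      have hcos1 : n ^ 2 - p ^ 2 / a ^ 2 ≤ 2 * (1 - cosα) * n ^ 2 := by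
        have ha' : a ≠ 0 := ne_of_gt ha
        have hdiv : p ^ 2 / a ^ 2 = cosα ^ 2 * n ^ 2 := by
          rw [hpc]; field_simp
        rw [hdiv]
        nlinarith [sq_nonneg (1 - cosα), sq_nonneg n]
      calc (((1/2) * n ^ 2) ^ θ) ^ 2 ≤ c' ^ 2 * (n ^ 2 - p ^ 2 / a ^ 2) := hKl2
        _ ≤ c' ^ 2 * (2 * (1 - cosα) * n ^ 2) :=
            mul_le_mul_of_nonneg_left hcos1 (sq_nonneg c')
        _ = c' ^ 2 * (2 * (1 - cosα)) * n ^ 2 := by ring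
  -- rpow identities
  have h2 : (0:ℝ) < 2 := two_pos
  have hbase : (0:ℝ) < (1/2) * n ^ 2 := by positivity
  have hA : (0:ℝ) < n ^ (4 * θ - 2) := Real.rpow_pos_of_pos hn _
  have H1 : (((1/2) * n ^ 2) ^ θ) ^ 2 = (2:ℝ) ^ (-(2 * θ)) * n ^ (4 * θ - 2) * n ^ 2 := by
    have e1 : (((1/2) * n ^ 2) ^ θ) ^ 2 = ((1/2) * n ^ 2) ^ (2 * θ) := by
      rw [← Real.rpow_natCast (((1/2) * n ^ 2) ^ θ) 2, ← Real.rpow_mul hbase.le]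
      norm_num [mul_comm]
    rw [e1, Real.mul_rpow (by norm_num) (by positivity)]
    have e2 : ((1:ℝ)/2) ^ (2 * θ) = (2:ℝ) ^ (-(2 * θ)) := by
      rw [one_div, ← Real.rpow_neg_one 2, ← Real.rpow_mul h2.le]
      ring_nf
    have e3 : (n ^ 2) ^ (2 * θ) = n ^ (4 * θ - 2) * n ^ 2 := by
      rw [← Real.rpow_natCast n 2, ← Real.rpow_mul hn.le, ← Real.rpow_add hn]
      congr 1
      push_cast
      ring
    rw [e2, e3]; ring
  have H2 : (2:ℝ) ^ (-(2 * θ) - 1) = (2:ℝ) ^ (-(2 * θ)) / 2 := by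
    rw [Real.rpow_sub h2, Real.rpow_one]
  rw [H1] at K
  have hn2 : (0:ℝ) < n ^ 2 := by positivity
  have K' : (2:ℝ) ^ (-(2 * θ)) * n ^ (4 * θ - 2) ≤ c' ^ 2 * (2 * (1 - cosα)) :=
    (mul_le_mul_iff_of_pos_right hn2).mp (by linarith [K])
  have hc0 : c' ≠ 0 := ne_of_gt hc'
  have h2c : (0:ℝ) < 2 * c' ^ 2 := by positivity
  have hX : (2:ℝ) ^ (-(2 * θ) - 1) * (1 / c') ^ 2 * n ^ (4 * θ - 2) * (2 * c' ^ 2)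
      = (2:ℝ) ^ (-(2 * θ)) * n ^ (4 * θ - 2) := by
    rw [H2]; field_simp
  rw [ge_iff_le, le_div_iff₀ hA, ← mul_le_mul_iff_of_pos_right h2c, hX]
  nlinarith [K']
end

section
/- For an n×N real matrix A, the function B ↦ ‖A − B‖_F² restricted to the smooth manifold M_r = {B : rank(B) = r} has a critical point at every truncation Σ_{i∈S} σ_i u_i v_i^T formed from any r-element subset S of indices of distinct nonzero singular values of A; among these, the global minimizer over the closure of M_r is attained at S = {1,...,r} (the r largest singular values). -/
open Finset



private lemma weight_sum_le (R r : ℕ) (hrR : r ≤ R) (w p : ℕ → ℝ)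
    (hwmono : ∀ i j : ℕ, i ≤ j → j < R → w j ≤ w i) (hw0 : ∀ i, i < R → 0 ≤ w i)
    (hp0 : ∀ i, 0 ≤ p i) (hp1 : ∀ i, i < R → p i ≤ 1)
    (hps : ∑ i ∈ Finset.range R, p i ≤ r) :
    ∑ i ∈ Finset.range R, w i * p i ≤ ∑ i ∈ Finset.range r, w i := by
  rcases eq_or_lt_of_le hrR with h | h
  · subst h
    apply Finset.sum_le_sum
    intro i hi
    have := hw0 i (mem_range.mp hi)
    nlinarith [hp0 i, hp1 i (mem_range.mp hi)]
  · have hwr : 0 ≤ w r := hw0 r h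
    have hsplit : ∑ i ∈ Finset.range r, w i * p i + ∑ i ∈ Finset.Ico r R, w i * p i
        = ∑ i ∈ Finset.range R, w i * p i := by
      rw [Finset.range_eq_Ico, Finset.range_eq_Ico]
      exact Finset.sum_Ico_consecutive _ (Nat.zero_le r) hrR
    have hsplitp : ∑ i ∈ Finset.range r, p i + ∑ i ∈ Finset.Ico r R, p i
        = ∑ i ∈ Finset.range R, p i := by
      rw [Finset.range_eq_Ico, Finset.range_eq_Ico]
      exact Finset.sum_Ico_consecutive _ (Nat.zero_le r) hrR
    have key1 : ∑ i ∈ Finset.Ico r R, w i * p i ≤ w r * ∑ i ∈ Finset.Ico r R, p i := by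
      rw [Finset.mul_sum]
      apply Finset.sum_le_sum
      intro i hi
      have hm := Finset.mem_Ico.mp hi
      exact mul_le_mul_of_nonneg_right (hwmono r i hm.1 hm.2) (hp0 i)
    have key2 : ∑ i ∈ Finset.Ico r R, p i ≤ ∑ i ∈ Finset.range r, (1 - p i) := by
      have h1 : ∑ i ∈ Finset.range r, (1 - p i) = r - ∑ i ∈ Finset.range r, p i := by
        rw [Finset.sum_sub_distrib]
        simp
      linarith
    have key3 : w r * ∑ i ∈ Finset.range r, (1 - p i) ≤ ∑ i ∈ Finset.range r, w i * (1 - p i) := by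
      rw [Finset.mul_sum]
      apply Finset.sum_le_sum
      intro i hi
      have hir := Finset.mem_range.mp hi
      have : w r ≤ w i := hwmono i r (le_of_lt hir) h
      nlinarith [hp1 i (lt_trans hir h)]
    have key4 : ∑ i ∈ Finset.range r, w i * (1 - p i)
        = ∑ i ∈ Finset.range r, w i - ∑ i ∈ Finset.range r, w i * p i := by
      rw [← Finset.sum_sub_distrib]
      congr 1; ext i; ring
    nlinarith [mul_le_mul_of_nonneg_left key2 hwr]

private lemma sq_expand (R : ℕ) {α : Type*} [Fintype α] (q : ℕ → α → ℝ)
    (hq : ∀ i < R, ∀ j < R, ∑ a, q i a * q j a = if i = j then 1 else 0)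
    (c : ℕ → ℝ) (T : Finset ℕ) (hT : T ⊆ Finset.range R) :
    ∑ a, (∑ i ∈ T, c i * q i a) ^ 2 = ∑ i ∈ T, c i ^ 2 := by
  have : ∀ a, (∑ i ∈ T, c i * q i a) ^ 2
      = ∑ i ∈ T, ∑ j ∈ T, (c i * c j) * (q i a * q j a) := by
    intro a
    rw [sq, Finset.sum_mul_sum]
    apply Finset.sum_congr rfl; intro i _
    apply Finset.sum_congr rfl; intro j _
    ring
  simp_rw [this]
  rw [Finset.sum_comm]
  apply Finset.sum_congr rfl; intro i hi
  rw [Finset.sum_comm]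
  have : ∀ j ∈ T, ∑ a, c i * c j * (q i a * q j a) = (c i * c j) * ∑ a, q i a * q j a := by
    intro j _
    rw [Finset.mul_sum]
  rw [Finset.sum_congr rfl this]
  have hstep : ∀ j ∈ T, (c i * c j) * ∑ a, q i a * q j a = if i = j then c i ^ 2 else 0 := by
    intro j hj
    rw [hq i (mem_range.mp (hT hi)) j (mem_range.mp (hT hj))]
    by_cases h : i = j
    · subst h; simp [sq]
    · simp [h]
  rw [Finset.sum_congr rfl hstep, Finset.sum_ite_eq T i (fun _ => c i ^ 2), if_pos hi]

private lemma pair_sum {n N : ℕ} (u : ℕ → Fin n → ℝ) (v : ℕ → Fin N → ℝ)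
    (x : Fin n → ℝ) (y : Fin N → ℝ) (c : ℕ → ℝ) (T : Finset ℕ) :
    ∑ a, ∑ b, x a * (∑ j ∈ T, c j * (u j a * v j b)) * y b
      = ∑ j ∈ T, c j * ((∑ a, x a * u j a) * (∑ b, v j b * y b)) := by
  have h1 : ∀ a b, x a * (∑ j ∈ T, c j * (u j a * v j b)) * y b
      = ∑ j ∈ T, c j * ((x a * u j a) * (v j b * y b)) := by
    intro a b
    rw [Finset.mul_sum, Finset.sum_mul]
    apply Finset.sum_congr rfl; intro j _; ring
  simp_rw [h1]
  have h2 : ∀ a : Fin n, ∑ b, ∑ j ∈ T, c j * ((x a * u j a) * (v j b * y b))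
      = ∑ j ∈ T, ∑ b, c j * ((x a * u j a) * (v j b * y b)) := fun a => Finset.sum_comm
  simp_rw [h2]
  rw [Finset.sum_comm]
  apply Finset.sum_congr rfl; intro j _
  rw [Finset.sum_mul_sum, Finset.mul_sum]
  apply Finset.sum_congr rfl; intro a _
  rw [Finset.mul_sum]

private lemma tangent_vanish {n N : ℕ} (R r : ℕ)
    (σ : ℕ → ℝ) (u : ℕ → Fin n → ℝ) (v : ℕ → Fin N → ℝ)
    (hσpos : ∀ i < R, 0 < σ i)
    (hu : ∀ i < R, ∀ j < R, ∑ a, u i a * u j a = if i = j then 1 else 0)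
    (hv : ∀ i < R, ∀ j < R, ∑ b, v i b * v j b = if i = j then 1 else 0)
    (S : Finset ℕ) (hS : S ⊆ Finset.range R) (hcard : S.card = r)
    (γ : ℝ → Matrix (Fin n) (Fin N) ℝ) (d : Matrix (Fin n) (Fin N) ℝ)
    (hd : ∀ a b, HasDerivAt (fun t => γ t a b) (d a b) 0)
    (hγ0 : γ 0 = ∑ i ∈ S, σ i • Matrix.of (fun a b => u i a * v i b))
    (hrank : ∀ t, (γ t).rank = r)
    (i : ℕ) (hiR : i < R) (hiS : i ∉ S) :
    ∑ a, ∑ b, u i a * d a b * v i b = 0 := by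
  classical
  set e := S.orderIsoOfFin hcard with he
  set f : Fin (r + 1) → ℕ := fun k => if h : (k : ℕ) < r then (e ⟨k, h⟩ : ℕ) else i with hf
  have hfS : ∀ (k : Fin (r+1)) (h : (k : ℕ) < r), f k ∈ S := by
    intro k h; simp only [hf, dif_pos h]; exact (e ⟨k, h⟩).2
  have hfi : ∀ (k : Fin (r+1)), ¬ ((k : ℕ) < r) → f k = i := by
    intro k h; simp only [hf, dif_neg h]
  have hfR : ∀ k, f k < R := by
    intro k
    by_cases h : (k : ℕ) < r
    · exact Finset.mem_range.mp (hS (hfS k h))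
    · rw [hfi k h]; exact hiR
  have hfinj : Function.Injective f := by
    intro k l hkl
    by_cases hk : (k : ℕ) < r <;> by_cases hl : (l : ℕ) < r
    · have hval : (e ⟨k, hk⟩ : ℕ) = (e ⟨l, hl⟩ : ℕ) := by
        simpa only [hf, dif_pos hk, dif_pos hl] using hkl
      have h2 : (⟨(k : ℕ), hk⟩ : Fin r) = ⟨(l : ℕ), hl⟩ := e.injective (Subtype.ext hval)
      have h3 : ((⟨(k : ℕ), hk⟩ : Fin r) : ℕ) = ((⟨(l : ℕ), hl⟩ : Fin r) : ℕ) := by rw [h2]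
      exact Fin.ext h3
    · have : i ∈ S := by rw [← hfi l hl, ← hkl]; exact hfS k hk
      exact absurd this hiS
    · have : i ∈ S := by rw [← hfi k hk, hkl]; exact hfS l hl
      exact absurd this hiS
    · have h1 : (k : ℕ) = r := le_antisymm (Nat.lt_succ_iff.mp k.2) (le_of_not_gt hk)
      have h2 : (l : ℕ) = r := le_antisymm (Nat.lt_succ_iff.mp l.2) (le_of_not_gt hl)
      exact Fin.ext (h1.trans h2.symm)
  set M : ℝ → Matrix (Fin (r + 1)) (Fin (r + 1)) ℝ :=
    fun t => Matrix.of fun k l => ∑ a, ∑ b, u (f k) a * γ t a b * v (f l) b with hM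
  -- every compression has zero determinant
  have hdet0 : ∀ t, (M t).det = 0 := by
    intro t
    by_contra hne
    have hunit : IsUnit (M t) := (Matrix.isUnit_iff_isUnit_det _).mpr (isUnit_iff_ne_zero.mpr hne)
    have hr1 : (M t).rank = r + 1 := by
      rw [Matrix.rank_of_isUnit _ hunit, Fintype.card_fin]
    have hfact : M t = (Matrix.of fun (k : Fin (r+1)) a => u (f k) a) * γ t *
        (Matrix.of fun b (l : Fin (r+1)) => v (f l) b) := by
      ext k l
      simp only [Matrix.mul_apply, Matrix.of_apply, hM]
      rw [Finset.sum_comm]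
      exact Finset.sum_congr rfl fun b _ => by rw [Finset.sum_mul]
    have hle : (M t).rank ≤ r := by
      rw [hfact]
      calc ((Matrix.of fun (k : Fin (r+1)) a => u (f k) a) * γ t *
          (Matrix.of fun b (l : Fin (r+1)) => v (f l) b)).rank
          ≤ ((Matrix.of fun (k : Fin (r+1)) a => u (f k) a) * γ t).rank :=
            Matrix.rank_mul_le_left _ _
        _ ≤ (γ t).rank := Matrix.rank_mul_le_right _ _
        _ = r := hrank t
    omega
  -- value at 0 is a "diagonal" matrix
  have hγ0' : ∀ a b, γ 0 a b = ∑ j ∈ S, σ j * (u j a * v j b) := by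
    intro a b
    rw [hγ0]
    simp [Matrix.sum_apply]
  have hM0 : ∀ k l, M 0 k l = if k = l ∧ (k : ℕ) < r then σ (f k) else 0 := by
    intro k l
    have : M 0 k l = ∑ j ∈ S, σ j * ((∑ a, u (f k) a * u j a) * (∑ b, v j b * v (f l) b)) := by
      simp only [hM, Matrix.of_apply]
      simp_rw [hγ0']
      exact pair_sum u v (u (f k)) (v (f l)) σ S
    rw [this]
    by_cases hk : (k : ℕ) < r
    · have hfkS : f k ∈ S := hfS k hk
      rw [Finset.sum_eq_single (f k)]
      · rw [hu (f k) (hfR k) (f k) (hfR k), if_pos rfl,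
          hv (f k) (hfR k) (f l) (hfR l)]
        by_cases hkl : k = l
        · subst hkl; simp [hk]
        · have : f k ≠ f l := fun h => hkl (hfinj h)
          simp [this, hkl]
      · intro j hjS hjne
        rw [hu (f k) (hfR k) j (Finset.mem_range.mp (hS hjS)),
          if_neg (fun h => hjne h.symm)]
        ring
      · intro h; exact absurd hfkS h
    · have hne : ¬ (k = l ∧ (k : ℕ) < r) := fun h => hk h.2
      rw [if_neg hne]
      apply Finset.sum_eq_zero
      intro j hjS
      have : f k ≠ j := by
        rw [hfi k hk]; intro h; exact hiS (h ▸ hjS)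
      rw [hu (f k) (hfR k) j (Finset.mem_range.mp (hS hjS)), if_neg this]
      ring
  -- derivative of entries
  set M' : Matrix (Fin (r + 1)) (Fin (r + 1)) ℝ :=
    Matrix.of fun k l => ∑ a, ∑ b, u (f k) a * d a b * v (f l) b with hM'
  have hMder : ∀ k l, HasDerivAt (fun t => M t k l) (M' k l) 0 := by
    intro k l
    simp only [hM, hM', Matrix.of_apply]
    apply HasDerivAt.fun_sum
    intro a _
    apply HasDerivAt.fun_sum
    intro b _
    exact (((hd a b).const_mul (u (f k) a)).mul_const (v (f l) b))
  -- derivative of det via Leibniz formula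
  set V : ℝ := ∑ π : Equiv.Perm (Fin (r + 1)), ((Equiv.Perm.sign π : ℤ) : ℝ) *
      ∑ k, (∏ l ∈ Finset.univ.erase k, M 0 (π l) l) • M' (π k) k with hV
  have hderdet : HasDerivAt (fun t => (M t).det) V 0 := by
    have hrw : (fun t => (M t).det) = fun t => ∑ π : Equiv.Perm (Fin (r + 1)),
        ((Equiv.Perm.sign π : ℤ) : ℝ) * ∏ l, M t (π l) l := by
      funext t; rw [Matrix.det_apply']
    rw [hrw, hV]
    apply HasDerivAt.fun_sum
    intro π _
    exact (HasDerivAt.fun_finset_prod fun l _ => hMder (π l) l).const_mul _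
  have hVzero : V = 0 := by
    have h0 : HasDerivAt (fun t => (M t).det) 0 0 := by
      have : (fun t : ℝ => (M t).det) = fun _ => (0 : ℝ) := funext hdet0
      rw [this]; exact hasDerivAt_const _ _
    exact hderdet.unique h0
  -- evaluate V
  set k₀ : Fin (r + 1) := Fin.last r with hk₀
  have hk₀r : ¬ ((k₀ : ℕ) < r) := by simp [hk₀]
  have hVeval : V = (∏ l ∈ Finset.univ.erase k₀, σ (f l)) * M' k₀ k₀ := by
    rw [hV]
    rw [Finset.sum_eq_single (1 : Equiv.Perm (Fin (r + 1)))]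
    · simp only [map_one, Units.val_one, Int.cast_one, one_mul, Equiv.Perm.one_apply]
      rw [Finset.sum_eq_single k₀]
      · rw [smul_eq_mul]
        congr 1
        apply Finset.prod_congr rfl
        intro l hl
        have hlk : l ≠ k₀ := (Finset.mem_erase.mp hl).1
        have hlr : (l : ℕ) < r := by
          rcases Nat.lt_succ_iff_lt_or_eq.mp l.2 with h | h
          · exact h
          · exact absurd (Fin.ext h : l = k₀) hlk
        rw [hM0 l l, if_pos ⟨rfl, hlr⟩]
      · intro k _ hk
        have : M 0 k₀ k₀ = 0 := by rw [hM0]; simp [hk₀r]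
        rw [Finset.prod_eq_zero (f := fun x => M 0 x x)
          (Finset.mem_erase.mpr ⟨Ne.symm hk, Finset.mem_univ _⟩) this, zero_smul]
      · intro h; exact absurd (Finset.mem_univ k₀) h
    · intro π _ hπ
      have : ∀ k : Fin (r + 1), (∏ l ∈ Finset.univ.erase k, M 0 (π l) l) = 0 := by
        intro k
        obtain ⟨l₀, hl₀⟩ : ∃ l₀, π l₀ ≠ l₀ := by
          by_contra hc
          push_neg at hc
          exact hπ (Equiv.ext hc)
        have hl₁ : π (π l₀) ≠ π l₀ := fun h => hl₀ (π.injective h)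
        set l : Fin (r + 1) := if l₀ = k then π l₀ else l₀ with hldef
        have hlk : l ≠ k := by
          by_cases hc : l₀ = k
          · simp only [hldef, if_pos hc]; rw [← hc]; exact fun h => hl₀ h
          · simp only [hldef, if_neg hc]; exact hc
        have hπl : π l ≠ l := by
          by_cases hc : l₀ = k
          · simp only [hldef, if_pos hc]; exact hl₁
          · simp only [hldef, if_neg hc]; exact hl₀
        have : M 0 (π l) l = 0 := by
          rw [hM0]
          simp [hπl]
        exact Finset.prod_eq_zero (Finset.mem_erase.mpr ⟨hlk, Finset.mem_univ _⟩) this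
      simp only [this, zero_smul, Finset.sum_const_zero, mul_zero]
    · intro h; exact absurd (Finset.mem_univ _) h
  have hP : 0 < ∏ l ∈ Finset.univ.erase k₀, σ (f l) :=
    Finset.prod_pos fun l _ => hσpos (f l) (hfR l)
  have hM'k₀ : M' k₀ k₀ = 0 := by
    have := hVeval ▸ hVzero
    exact (mul_eq_zero.mp this).resolve_left (ne_of_gt hP)
  have : M' k₀ k₀ = ∑ a, ∑ b, u i a * d a b * v i b := by
    rw [hM', Matrix.of_apply, hfi k₀ hk₀r]
  rw [← this]; exact hM'k₀

private lemma norm_sq_euclid {m : ℕ} (z : EuclideanSpace ℝ (Fin m)) :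
    ‖z‖ ^ 2 = ∑ j, (z j) ^ 2 := by
  rw [← real_inner_self_eq_norm_sq, PiLp.inner_apply]
  apply Finset.sum_congr rfl
  intro j _
  rw [RCLike.inner_apply, conj_trivial, sq]

private lemma proj_norm_sq {E : Type*} [NormedAddCommGroup E] [InnerProductSpace ℝ E]
    [FiniteDimensional ℝ E] (K : Submodule ℝ E) (x : E) :
    ‖(K.orthogonalProjection x : K)‖ ^ 2
      = ∑ j, (inner ℝ (((stdOrthonormalBasis ℝ K) j : E)) x : ℝ) ^ 2 := by
  set b := stdOrthonormalBasis ℝ K with hb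
  set y := K.orthogonalProjection x with hy
  have h1 : ‖y‖ = ‖b.repr y‖ := (b.repr.norm_map y).symm
  rw [h1, norm_sq_euclid]
  apply Finset.sum_congr rfl
  intro j _
  rw [b.repr_apply_apply, Submodule.inner_orthogonalProjection_eq_of_mem_left]

private lemma euclid_inner {m : ℕ} (x y : EuclideanSpace ℝ (Fin m)) :
    (inner ℝ x y : ℝ) = ∑ b, x b * y b := by
  rw [PiLp.inner_apply]
  apply Finset.sum_congr rfl
  intro b _
  rw [RCLike.inner_apply, conj_trivial, mul_comm]

set_option maxHeartbeats 1000000 in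
private lemma eckart {n N : ℕ} (R r : ℕ)
    (σ : ℕ → ℝ) (u : ℕ → Fin n → ℝ) (v : ℕ → Fin N → ℝ)
    (hσpos : ∀ i < R, 0 < σ i)
    (hσdistinct : ∀ i j, i < j → j < R → σ j < σ i)
    (hu : ∀ i < R, ∀ j < R, ∑ a, u i a * u j a = if i = j then 1 else 0)
    (hv : ∀ i < R, ∀ j < R, ∑ b, v i b * v j b = if i = j then 1 else 0)
    (hrR : r ≤ R)
    (A : Matrix (Fin n) (Fin N) ℝ)
    (hA : A = ∑ i ∈ Finset.range R, σ i • Matrix.of (fun a b => u i a * v i b))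
    (B : Matrix (Fin n) (Fin N) ℝ) (hB : B.rank ≤ r) :
    ∑ i ∈ Finset.Ico r R, σ i ^ 2 ≤ ∑ a, ∑ b, (A a b - B a b) ^ 2 := by
  classical
  have hAe : ∀ a b, A a b = ∑ i ∈ Finset.range R, σ i * (u i a * v i b) := by
    intro a b; rw [hA]; simp [Matrix.sum_apply]
  set vE : ℕ → (EuclideanSpace ℝ (Fin N)) := fun i => (WithLp.equiv 2 (Fin N → ℝ)).symm (v i) with hvE
  have hvEb : ∀ i b, vE i b = v i b := fun i b => rfl
  -- the subtype family is orthonormal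
  have hON : Orthonormal ℝ (fun i : {x // x ∈ Finset.range R} => vE (i : ℕ)) := by
    rw [orthonormal_iff_ite]
    intro i j
    rw [euclid_inner]
    simp_rw [hvEb]
    rw [hv i (Finset.mem_range.mp i.2) j (Finset.mem_range.mp j.2)]
    by_cases h : (i : ℕ) = (j : ℕ)
    · rw [if_pos h, if_pos (Subtype.ext h)]
    · rw [if_neg h, if_neg (fun hc => h (congrArg Subtype.val hc))]
  -- kernel of B
  set K : Submodule ℝ (EuclideanSpace ℝ (Fin N)) := LinearMap.ker (Matrix.toEuclideanLin B) with hK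
  have hrankB : B.rank = Module.finrank ℝ (LinearMap.range (Matrix.toEuclideanLin B)) := by
    rw [Matrix.toEuclideanLin_eq_toLin]
    exact Matrix.rank_eq_finrank_range_toLin B (PiLp.basisFun 2 ℝ (Fin n)) (PiLp.basisFun 2 ℝ (Fin N))
  have hdim : Module.finrank ℝ K + B.rank = N := by
    rw [hrankB, hK]
    rw [add_comm]
    rw [LinearMap.finrank_range_add_finrank_ker (Matrix.toEuclideanLin B)]
    exact finrank_euclideanSpace_fin
  have hdimperp : Module.finrank ℝ (Kᗮ : Submodule ℝ (EuclideanSpace ℝ (Fin N))) = B.rank := by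
    have h2 := Submodule.finrank_add_finrank_orthogonal K
    rw [finrank_euclideanSpace_fin] at h2
    omega
  set bK := stdOrthonormalBasis ℝ K with hbK
  set bP := stdOrthonormalBasis ℝ (Kᗮ : Submodule ℝ (EuclideanSpace ℝ (Fin N))) with hbP
  have hbKON : Orthonormal ℝ (fun j => (bK j : (EuclideanSpace ℝ (Fin N)))) := by
    rw [orthonormal_iff_ite]
    intro j k
    have := (orthonormal_iff_ite.mp bK.orthonormal) j k
    rw [Submodule.coe_inner] at this
    rw [this]
  have hbPON : Orthonormal ℝ (fun j => (bP j : (EuclideanSpace ℝ (Fin N)))) := by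
    rw [orthonormal_iff_ite]
    intro j k
    have := (orthonormal_iff_ite.mp bP.orthonormal) j k
    rw [Submodule.coe_inner] at this
    rw [this]
  set cc : ℕ → ℝ := fun i => ∑ j, (inner ℝ ((bK j : (EuclideanSpace ℝ (Fin N)))) (vE i) : ℝ) ^ 2 with hcc
  set pp : ℕ → ℝ := fun i => ∑ k, (inner ℝ ((bP k : (EuclideanSpace ℝ (Fin N)))) (vE i) : ℝ) ^ 2 with hpp
  have hcc0 : ∀ i, 0 ≤ cc i := fun i => Finset.sum_nonneg fun j _ => sq_nonneg _
  have hpp0 : ∀ i, 0 ≤ pp i := fun i => Finset.sum_nonneg fun j _ => sq_nonneg _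
  -- cc i + pp i = 1 for i < R
  have hnorm1 : ∀ i, i < R → ‖vE i‖ ^ 2 = 1 := by
    intro i hi
    rw [← real_inner_self_eq_norm_sq, euclid_inner]
    simp_rw [hvEb]
    rw [hv i hi i hi, if_pos rfl]
  have hccpp : ∀ i, i < R → cc i + pp i = 1 := by
    intro i hi
    have h1 := Submodule.norm_sq_eq_add_norm_sq_projection (vE i) K
    rw [hnorm1 i hi] at h1
    show (∑ j, (inner ℝ ((bK j : (EuclideanSpace ℝ (Fin N)))) (vE i) : ℝ) ^ 2)
        + (∑ k, (inner ℝ ((bP k : (EuclideanSpace ℝ (Fin N)))) (vE i) : ℝ) ^ 2) = 1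
    rw [hbK, hbP, ← proj_norm_sq K (vE i), ← proj_norm_sq Kᗮ (vE i)]
    exact h1.symm
  have hpp1 : ∀ i, i < R → pp i ≤ 1 := by
    intro i hi
    have := hccpp i hi
    have := hcc0 i
    linarith
  -- sum of pp over range R is at most r
  have hppsum : ∑ i ∈ Finset.range R, pp i ≤ (r : ℝ) := by
    have hswap : ∑ i ∈ Finset.range R, pp i
        = ∑ k, ∑ i ∈ Finset.range R, (inner ℝ ((bP k : (EuclideanSpace ℝ (Fin N)))) (vE i) : ℝ) ^ 2 := by
      rw [Finset.sum_comm]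
    rw [hswap]
    have hbound : ∀ k, ∑ i ∈ Finset.range R, (inner ℝ ((bP k : (EuclideanSpace ℝ (Fin N)))) (vE i) : ℝ) ^ 2 ≤ 1 := by
      intro k
      have hbes := Orthonormal.sum_inner_products_le (𝕜 := ℝ) ((bP k : (EuclideanSpace ℝ (Fin N))))
        (s := Finset.univ) hON
      have hnrm : ‖(bP k : (EuclideanSpace ℝ (Fin N)))‖ = 1 := by
        exact bP.orthonormal.1 k
      rw [hnrm, one_pow] at hbes
      calc ∑ i ∈ Finset.range R, (inner ℝ ((bP k : (EuclideanSpace ℝ (Fin N)))) (vE i) : ℝ) ^ 2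
          = ∑ i : {x // x ∈ Finset.range R}, (inner ℝ ((bP k : (EuclideanSpace ℝ (Fin N)))) (vE (i : ℕ)) : ℝ) ^ 2 :=
            (Finset.sum_coe_sort (Finset.range R) (fun i => (inner ℝ ((bP k : (EuclideanSpace ℝ (Fin N)))) (vE i) : ℝ) ^ 2)).symm
        _ ≤ 1 := by
            refine le_trans (le_of_eq ?_) hbes
            apply Finset.sum_congr rfl
            intro i _
            rw [real_inner_comm, Real.norm_eq_abs, sq_abs]
    calc ∑ k, ∑ i ∈ Finset.range R, (inner ℝ ((bP k : (EuclideanSpace ℝ (Fin N)))) (vE i) : ℝ) ^ 2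
        ≤ ∑ k : Fin (Module.finrank ℝ (Kᗮ : Submodule ℝ (EuclideanSpace ℝ (Fin N)))), (1 : ℝ) :=
          Finset.sum_le_sum fun k _ => hbound k
      _ = (Module.finrank ℝ (Kᗮ : Submodule ℝ (EuclideanSpace ℝ (Fin N))) : ℝ) := by simp
      _ ≤ (r : ℝ) := by
          rw [hdimperp]
          exact_mod_cast hB
  -- matrix application formula
  have happly : ∀ (M : Matrix (Fin n) (Fin N) ℝ) (w : (EuclideanSpace ℝ (Fin N))) (a : Fin n),
      (Matrix.toEuclideanLin M w) a = ∑ b, M a b * w b := by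
    intro M w a
    rfl
  have hTB0 : ∀ j, Matrix.toEuclideanLin B (bK j : (EuclideanSpace ℝ (Fin N))) = 0 := by
    intro j
    exact LinearMap.mem_ker.mp (bK j).2
  have hsub : ∀ j, Matrix.toEuclideanLin (A - B) (bK j : (EuclideanSpace ℝ (Fin N)))
      = Matrix.toEuclideanLin A (bK j : (EuclideanSpace ℝ (Fin N))) := by
    intro j
    rw [map_sub, LinearMap.sub_apply, hTB0 j, sub_zero]
  set rowv : Fin n → (EuclideanSpace ℝ (Fin N)) := fun a => (WithLp.equiv 2 (Fin N → ℝ)).symm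
    (fun b => A a b - B a b) with hrowv
  have hrowvb : ∀ a b, rowv a b = A a b - B a b := fun a b => rfl
  have hkey1 : ∑ j, ‖Matrix.toEuclideanLin A (bK j : (EuclideanSpace ℝ (Fin N)))‖ ^ 2
      ≤ ∑ a, ∑ b, (A a b - B a b) ^ 2 := by
    have hexp : ∀ j, ‖Matrix.toEuclideanLin A (bK j : (EuclideanSpace ℝ (Fin N)))‖ ^ 2
        = ∑ a, (inner ℝ (rowv a) ((bK j : (EuclideanSpace ℝ (Fin N)))) : ℝ) ^ 2 := by
      intro j
      rw [← hsub j, norm_sq_euclid]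
      apply Finset.sum_congr rfl; intro a _
      rw [euclid_inner, happly]
      congr 1
    simp_rw [hexp]
    rw [Finset.sum_comm]
    have hbnd : ∀ a, ∑ j, (inner ℝ (rowv a) ((bK j : (EuclideanSpace ℝ (Fin N)))) : ℝ) ^ 2 ≤ ∑ b, (A a b - B a b) ^ 2 := by
      intro a
      have hbes := Orthonormal.sum_inner_products_le (𝕜 := ℝ) (rowv a)
        (s := Finset.univ) hbKON
      have : ‖rowv a‖ ^ 2 = ∑ b, (A a b - B a b) ^ 2 := by
        rw [norm_sq_euclid]
        exact Finset.sum_congr rfl fun b _ => by rw [hrowvb]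
      rw [this] at hbes
      refine le_trans (le_of_eq ?_) hbes
      apply Finset.sum_congr rfl; intro j _
      rw [real_inner_comm, Real.norm_eq_abs, sq_abs]
    exact Finset.sum_le_sum fun a _ => hbnd a
  -- value of ‖T_A w‖²
  have hTAval : ∀ w : (EuclideanSpace ℝ (Fin N)), ‖Matrix.toEuclideanLin A w‖ ^ 2
      = ∑ i ∈ Finset.range R, (σ i * (inner ℝ (vE i) w : ℝ)) ^ 2 := by
    intro w
    rw [norm_sq_euclid]
    have hentry : ∀ a, (Matrix.toEuclideanLin A w) a
        = ∑ i ∈ Finset.range R, (σ i * (inner ℝ (vE i) w : ℝ)) * u i a := by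
      intro a
      rw [happly]
      have h1 : ∀ b : Fin N, A a b * w b
          = ∑ i ∈ Finset.range R, σ i * (u i a * (v i b * w b)) := by
        intro b
        rw [hAe, Finset.sum_mul]
        apply Finset.sum_congr rfl; intro i _; ring
      simp_rw [h1]
      rw [Finset.sum_comm]
      apply Finset.sum_congr rfl; intro i _
      rw [euclid_inner, Finset.mul_sum]
      simp_rw [hvEb]
      rw [Finset.sum_mul]
      apply Finset.sum_congr rfl; intro b _
      ring
    simp_rw [hentry]
    exact sq_expand R u hu (fun i => σ i * (inner ℝ (vE i) w : ℝ)) (Finset.range R)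
      (subset_refl _)
  -- combine
  have hkey2 : ∑ i ∈ Finset.range R, σ i ^ 2 * cc i ≤ ∑ a, ∑ b, (A a b - B a b) ^ 2 := by
    refine le_trans (le_of_eq ?_) hkey1
    have h1 : ∀ i ∈ Finset.range R, σ i ^ 2 * cc i
        = ∑ j, (σ i * (inner ℝ (vE i) ((bK j : (EuclideanSpace ℝ (Fin N)))) : ℝ)) ^ 2 := by
      intro i _
      show σ i ^ 2 * (∑ j, (inner ℝ ((bK j : (EuclideanSpace ℝ (Fin N)))) (vE i) : ℝ) ^ 2) = _
      rw [Finset.mul_sum]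
      apply Finset.sum_congr rfl; intro j _
      rw [real_inner_comm]
      ring
    rw [Finset.sum_congr rfl h1, Finset.sum_comm]
    apply Finset.sum_congr rfl; intro j _
    exact (hTAval ((bK j : (EuclideanSpace ℝ (Fin N))))).symm
  -- weights
  have hwmono : ∀ i j : ℕ, i ≤ j → j < R → σ j ^ 2 ≤ σ i ^ 2 := by
    intro i j hij hjR
    rcases eq_or_lt_of_le hij with h | h
    · subst h; exact le_refl _
    · have h1 := hσdistinct i j h hjR
      have h2 := hσpos j hjR
      nlinarith
  have hw0 : ∀ i, i < R → 0 ≤ σ i ^ 2 := fun i _ => sq_nonneg _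
  have hwle := weight_sum_le R r hrR (fun i => σ i ^ 2) pp hwmono hw0 hpp0 hpp1 hppsum
  have hsplit : ∑ i ∈ Finset.range r, σ i ^ 2 + ∑ i ∈ Finset.Ico r R, σ i ^ 2
      = ∑ i ∈ Finset.range R, σ i ^ 2 := by
    rw [Finset.range_eq_Ico, Finset.range_eq_Ico]
    exact Finset.sum_Ico_consecutive _ (Nat.zero_le r) hrR
  have e1 : ∑ i ∈ Finset.range R, σ i ^ 2 * cc i
      = ∑ i ∈ Finset.range R, σ i ^ 2 - ∑ i ∈ Finset.range R, σ i ^ 2 * pp i := by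
    rw [← Finset.sum_sub_distrib]
    apply Finset.sum_congr rfl; intro i hi
    have := hccpp i (Finset.mem_range.mp hi)
    have hcceq : cc i = 1 - pp i := by linarith
    rw [hcceq]; ring
  linarith


/-- Critical points of `B ↦ ‖A − B‖_F²` on the fixed-rank manifold
`M_r = {B : rank B = r}`.  Let `A = ∑_{i<R} σᵢ uᵢ vᵢᵀ` be an SVD of `A` with
distinct nonzero singular values `σ₀ > σ₁ > ⋯ > σ_{R-1} > 0` and orthonormal
families `u`, `v`.  Then for every `r`-element subset `S ⊆ {0,…,R−1}` the
truncation `X_S = ∑_{i∈S} σᵢ uᵢ vᵢᵀ` is a critical point of the restriction: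
along any differentiable curve `γ` in `M_r` through `X_S`, the derivative of
`t ↦ ‖A − γ(t)‖_F²` at `t = 0` vanishes.  Moreover, among all matrices of rank
at most `r` (the closure of `M_r`), the squared residual is globally minimized
by the choice `S = {0,…,r−1}` of the `r` largest singular values. -/
theorem stmt_17 (n N R r : ℕ) (A : Matrix (Fin n) (Fin N) ℝ)
    (σ : ℕ → ℝ) (u : ℕ → Fin n → ℝ) (v : ℕ → Fin N → ℝ)
    (hσpos : ∀ i < R, 0 < σ i)
    (hσdistinct : ∀ i j, i < j → j < R → σ j < σ i)
    (hu : ∀ i < R, ∀ j < R, ∑ a, u i a * u j a = if i = j then 1 else 0)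
    (hv : ∀ i < R, ∀ j < R, ∑ b, v i b * v j b = if i = j then 1 else 0)
    (hA : A = ∑ i ∈ Finset.range R, σ i • Matrix.of (fun a b => u i a * v i b))
    (hrR : r ≤ R) :
    (∀ S : Finset ℕ, S ⊆ Finset.range R → S.card = r →
      ∀ (γ : ℝ → Matrix (Fin n) (Fin N) ℝ) (d : Matrix (Fin n) (Fin N) ℝ),
        (∀ a b, HasDerivAt (fun t => γ t a b) (d a b) 0) →
        γ 0 = ∑ i ∈ S, σ i • Matrix.of (fun a b => u i a * v i b) →
        (∀ t, (γ t).rank = r) →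
        HasDerivAt (fun t => ∑ a, ∑ b, (A a b - γ t a b) ^ 2) 0 0) ∧
    (∀ B : Matrix (Fin n) (Fin N) ℝ, B.rank ≤ r →
      ∑ a, ∑ b, (A a b - (∑ i ∈ Finset.range r,
          σ i • Matrix.of (fun a b => u i a * v i b)) a b) ^ 2 ≤
        ∑ a, ∑ b, (A a b - B a b) ^ 2) := by
  classical
  constructor
  · intro S hSsub hScard γ d hd hγ0 hrank
    have hT : ∀ j, j ∈ Finset.range R → j ∉ S →
        ∑ a, ∑ b, u j a * d a b * v j b = 0 := by
      intro j hjR hjS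
      exact tangent_vanish R r σ u v hσpos hu hv S hSsub hScard γ d hd hγ0 hrank
        j (Finset.mem_range.mp hjR) hjS
    have hder : HasDerivAt (fun t => ∑ a, ∑ b, (A a b - γ t a b) ^ 2)
        (∑ a, ∑ b, ((2 : ℕ) : ℝ) * (A a b - γ 0 a b) ^ (2 - 1) * -(d a b)) 0 := by
      apply HasDerivAt.fun_sum
      intro a _
      apply HasDerivAt.fun_sum
      intro b _
      exact ((hd a b).const_sub (A a b)).pow 2
    have hdiff : ∀ a b, A a b - γ 0 a b
        = ∑ j ∈ Finset.range R \ S, σ j * (u j a * v j b) := by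
      intro a b
      rw [hγ0, hA]
      simp only [Matrix.sum_apply, Matrix.smul_apply, Matrix.of_apply, smul_eq_mul]
      rw [← Finset.sum_sdiff hSsub]
      ring
    have hval : (∑ a, ∑ b, ((2 : ℕ) : ℝ) * (A a b - γ 0 a b) ^ (2 - 1) * -(d a b)) = 0 := by
      have h1 : ∀ a b, ((2 : ℕ) : ℝ) * (A a b - γ 0 a b) ^ (2 - 1) * -(d a b)
          = ∑ j ∈ Finset.range R \ S, (-2 * σ j) * (u j a * d a b * v j b) := by
        intro a b
        have h21 : (2 : ℕ) - 1 = 1 := rfl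
        rw [hdiff a b, h21, pow_one, Finset.mul_sum, Finset.sum_mul]
        apply Finset.sum_congr rfl; intro j _
        push_cast
        ring
      simp_rw [h1]
      have h2 : ∀ a : Fin n, ∑ b, ∑ j ∈ Finset.range R \ S,
          (-2 * σ j) * (u j a * d a b * v j b)
          = ∑ j ∈ Finset.range R \ S, ∑ b, (-2 * σ j) * (u j a * d a b * v j b) :=
        fun a => Finset.sum_comm
      simp_rw [h2]
      rw [Finset.sum_comm]
      apply Finset.sum_eq_zero
      intro j hj
      have hj' := Finset.mem_sdiff.mp hj
      have h3 : ∑ a, ∑ b, (-2 * σ j) * (u j a * d a b * v j b)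
          = (-2 * σ j) * ∑ a, ∑ b, u j a * d a b * v j b := by
        rw [Finset.mul_sum]
        apply Finset.sum_congr rfl; intro a _
        rw [Finset.mul_sum]
      rw [h3, hT j hj'.1 hj'.2, mul_zero]
    rw [hval] at hder
    exact hder
  · intro B hB
    have hentry : ∀ a b, A a b - (∑ i ∈ Finset.range r,
        σ i • Matrix.of (fun a b => u i a * v i b)) a b
        = ∑ i ∈ Finset.Ico r R, σ i * (u i a * v i b) := by
      intro a b
      rw [hA]
      simp only [Matrix.sum_apply, Matrix.smul_apply, Matrix.of_apply, smul_eq_mul]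
      rw [Finset.range_eq_Ico, Finset.range_eq_Ico,
        ← Finset.sum_Ico_consecutive (fun i => σ i * (u i a * v i b)) (Nat.zero_le r) hrR]
      ring
    have hLHS : ∑ a, ∑ b, (A a b - (∑ i ∈ Finset.range r,
        σ i • Matrix.of (fun a b => u i a * v i b)) a b) ^ 2
        = ∑ i ∈ Finset.Ico r R, σ i ^ 2 := by
      simp_rw [hentry]
      have hq : ∀ i < R, ∀ j < R, ∑ p : Fin n × Fin N,
          (u i p.1 * v i p.2) * (u j p.1 * v j p.2) = if i = j then 1 else 0 := by
        intro i hi j hj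
        rw [Fintype.sum_prod_type]
        have h4 : ∀ a : Fin n, ∑ b, (u i a * v i b) * (u j a * v j b)
            = (u i a * u j a) * ∑ b, v i b * v j b := by
          intro a; rw [Finset.mul_sum]; apply Finset.sum_congr rfl; intro b _; ring
        simp_rw [h4]
        rw [← Finset.sum_mul, hu i hi j hj, hv i hi j hj]
        by_cases h : i = j
        · simp [h]
        · simp [h]
      have hsub : Finset.Ico r R ⊆ Finset.range R := by
        rw [Finset.range_eq_Ico]
        exact Finset.Ico_subset_Ico (Nat.zero_le r) le_rfl
      have hse := sq_expand R (fun i (p : Fin n × Fin N) => u i p.1 * v i p.2) hq σ (Finset.Ico r R) hsub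
      rw [Fintype.sum_prod_type] at hse
      exact hse
    rw [hLHS]
    exact eckart R r σ u v hσpos hσdistinct hu hv hrR A hA B hB
end
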